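/- The map (K, u) ↦ x_K(u) is continuous on the product of the space of strictly convex bodies in ℝ^n (with the Hausdorff metric) and the unit sphere S^{n−1}, where x_K(u) is the unique point of K maximizing ⟨·,u⟩. -/

import Mathlib

open scoped RealInnerProductSpace
open Filter Metric Topology

lemma unique_max_of_strictConvex {E : Type*} [NormedAddCommGroup E] [InnerProductSpace ℝ E]
    {K : Set E} (hK : StrictConvex ℝ K) {u : E} (hu : u ≠ 0)
    {x y : E} (hx : x ∈ K) (hy : y ∈ K)
    (hxm : IsMaxOn (fun z => ⟪z, u⟫) K x) (hym : IsMaxOn (fun z => ⟪z, u⟫) K y) : x = y := by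
  by_contra hne
  have hxy : ⟪x, u⟫ = ⟪y, u⟫ := le_antisymm (hym hx) (hxm hy)
  have hmem : (1/2 : ℝ) • x + (1/2 : ℝ) • y ∈ interior K :=
    hK hx hy hne (by norm_num) (by norm_num) (by norm_num)
  set m := (1/2 : ℝ) • x + (1/2 : ℝ) • y with hm
  have hmu : ⟪m, u⟫ = ⟪x, u⟫ := by
    rw [hm, inner_add_left, real_inner_smul_left, real_inner_smul_left, ← hxy]; ring
  obtain ⟨ε, hε, hball⟩ := Metric.isOpen_iff.mp isOpen_interior m hmem
  have hun : 0 < ‖u‖ := norm_pos_iff.mpr hu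
  set t : ℝ := ε / (2 * ‖u‖) with ht
  have htpos : 0 < t := by positivity
  have hwK : m + t • u ∈ K := by
    apply interior_subset
    apply hball
    rw [Metric.mem_ball, dist_eq_norm]
    have : m + t • u - m = t • u := by abel
    have h2 : t * ‖u‖ = ε / 2 := by
      rw [ht]; field_simp
    rw [this, norm_smul, Real.norm_eq_abs, abs_of_pos htpos, h2]
    linarith
  have : ⟪m + t • u, u⟫ ≤ ⟪x, u⟫ := hxm hwK
  rw [inner_add_left, real_inner_smul_left, hmu, real_inner_self_eq_norm_sq] at this
  have hpos : 0 < t * ‖u‖ ^ 2 := by positivity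
  linarith

set_option synthInstance.maxHeartbeats 1000000

/-- The map `(K, u) ↦ x_K(u)` is continuous on the product of the space of strictly convex
bodies in `ℝⁿ` (with the Hausdorff metric) and the unit sphere `S^{n-1}`, where `x_K(u)` is the
unique point of `K` maximizing `⟪·,u⟫`. -/
theorem stmt4 {n : ℕ}
    (f : {K : ConvexBody (EuclideanSpace ℝ (Fin n)) //
            StrictConvex ℝ (K : Set (EuclideanSpace ℝ (Fin n)))} ×
          Metric.sphere (0 : EuclideanSpace ℝ (Fin n)) 1 → EuclideanSpace ℝ (Fin n))
    (hf : ∀ p, f p ∈ (p.1 : ConvexBody (EuclideanSpace ℝ (Fin n))) ∧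
      IsMaxOn (fun y => ⟪y, (p.2 : EuclideanSpace ℝ (Fin n))⟫)
        ((p.1 : ConvexBody (EuclideanSpace ℝ (Fin n))) : Set (EuclideanSpace ℝ (Fin n))) (f p)) :
    Continuous f := by
  set E := EuclideanSpace ℝ (Fin n)
  -- key: for any sequence tending to q, some subsequence of images tends to f q
  have key : ∀ (p : ℕ → _) (q), Tendsto p atTop (𝓝 q) →
      ∃ ms : ℕ → ℕ, Tendsto (fun k => f (p (ms k))) atTop (𝓝 (f q)) := by
    intro p q hp
    -- component convergence
    have hKc : Tendsto (fun k => ((p k).1 : ConvexBody E)) atTop (𝓝 (q.1 : ConvexBody E)) :=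
      ((continuous_subtype_val.comp continuous_fst).tendsto q).comp hp
    have huc : Tendsto (fun k => ((p k).2 : E)) atTop (𝓝 (q.2 : E)) :=
      ((continuous_subtype_val.comp continuous_snd).tendsto q).comp hp
    set Kq : ConvexBody E := (q.1 : ConvexBody E) with hKq
    have hd : Tendsto (fun k => dist ((p k).1 : ConvexBody E) Kq) atTop (𝓝 0) :=
      tendsto_iff_dist_tendsto_zero.mp hKc
    -- distances of optimum points to Kq tend to 0
    have hdinf : ∀ k, Metric.infDist (f (p k)) (Kq : Set E) ≤
        dist ((p k).1 : ConvexBody E) Kq := by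
      intro k
      rw [← ConvexBody.hausdorffDist_coe]
      exact Metric.infDist_le_hausdorffDist_of_mem (hf (p k)).1 ConvexBody.hausdorffEdist_ne_top
    have hinf0 : Tendsto (fun k => Metric.infDist (f (p k)) (Kq : Set E)) atTop (𝓝 0) :=
      squeeze_zero (fun k => Metric.infDist_nonneg) hdinf hd
    -- eventual boundedness
    obtain ⟨R, hR⟩ := (isBounded_iff_subset_closedBall 0).mp Kq.isBounded
    have hbd : ∀ᶠ k in atTop, f (p k) ∈ Metric.closedBall (0 : E) (R + 1) := by
      filter_upwards [hd.eventually (eventually_le_nhds (by norm_num : (0:ℝ) < 1))] with k hk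
      obtain ⟨y, hyK, hyd⟩ := Kq.isCompact.exists_infDist_eq_dist Kq.nonempty (f (p k))
      have h1 : dist (f (p k)) y ≤ 1 := by
        rw [← hyd]; exact (hdinf k).trans hk
      have h2 : dist y (0 : E) ≤ R := hR hyK
      rw [Metric.mem_closedBall]
      calc dist (f (p k)) 0 ≤ dist (f (p k)) y + dist y 0 := dist_triangle _ _ _
        _ ≤ R + 1 := by linarith
    obtain ⟨y, -, φ, hφ, hyt⟩ := (isCompact_closedBall (0 : E) (R + 1)).tendsto_subseq'
      hbd.frequently
    refine ⟨φ, ?_⟩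
    -- y ∈ Kq
    have hyK : y ∈ (Kq : Set E) := by
      have h1 : Tendsto (fun k => Metric.infDist (f (p (φ k))) (Kq : Set E)) atTop
          (𝓝 (Metric.infDist y (Kq : Set E))) :=
        ((Metric.continuous_infDist_pt (Kq : Set E)).tendsto y).comp hyt
      have h2 : Tendsto (fun k => Metric.infDist (f (p (φ k))) (Kq : Set E)) atTop (𝓝 0) :=
        hinf0.comp hφ.tendsto_atTop
      have h0 : Metric.infDist y (Kq : Set E) = 0 := tendsto_nhds_unique h1 h2
      exact (Kq.isClosed.mem_iff_infDist_zero Kq.nonempty).mpr h0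
    -- y is a maximizer on Kq
    have hymax : IsMaxOn (fun z => ⟪z, (q.2 : E)⟫) (Kq : Set E) y := by
      intro z hz
      -- approximate z by points of the bodies
      have hwex : ∀ k, ∃ w ∈ (((p k).1 : ConvexBody E) : Set E),
          Metric.infDist z (((p k).1 : ConvexBody E) : Set E) = dist z w := fun k =>
        ((p k).1 : ConvexBody E).isCompact.exists_infDist_eq_dist
          ((p k).1 : ConvexBody E).nonempty z
      choose w hwmem hwd using hwex
      have hwz : Tendsto w atTop (𝓝 z) := by
        rw [tendsto_iff_dist_tendsto_zero]
        refine squeeze_zero (fun k => dist_nonneg) (fun k => ?_) (by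
          simpa [dist_comm] using hd)
        rw [dist_comm, ← hwd k, ← ConvexBody.hausdorffDist_coe]
        exact Metric.infDist_le_hausdorffDist_of_mem hz ConvexBody.hausdorffEdist_ne_top
      have hineq : ∀ k, ⟪w (φ k), ((p (φ k)).2 : E)⟫ ≤ ⟪f (p (φ k)), ((p (φ k)).2 : E)⟫ :=
        fun k => (hf (p (φ k))).2 (hwmem (φ k))
      have hl : Tendsto (fun k => ⟪w (φ k), ((p (φ k)).2 : E)⟫) atTop (𝓝 ⟪z, (q.2 : E)⟫) :=
        (hwz.comp hφ.tendsto_atTop).inner (huc.comp hφ.tendsto_atTop)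
      have hr : Tendsto (fun k => ⟪f (p (φ k)), ((p (φ k)).2 : E)⟫) atTop
          (𝓝 ⟪y, (q.2 : E)⟫) := hyt.inner (huc.comp hφ.tendsto_atTop)
      exact le_of_tendsto_of_tendsto' hl hr hineq
    -- uniqueness
    have hu : (q.2 : E) ≠ 0 := by
      have := q.2.2
      rw [mem_sphere_zero_iff_norm] at this
      intro h; rw [h] at this; simp at this
    have : y = f q :=
      unique_max_of_strictConvex q.1.2 hu hyK (hf q).1 hymax (hf q).2
    rwa [this] at hyt
  refine continuous_iff_seqContinuous.mpr ?_
  intro p q hp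
  refine tendsto_of_subseq_tendsto fun ns hns => ?_
  exact key (p ∘ ns) q (hp.comp hns)
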